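/- Let r > 0 be a real number, let m, k ≥ 1 be integers, and let a, b, c be real numbers (the values at the start, an intermediate point, and the end of a path of lengths m and k on its two pieces). Then σ_r(a, c, m + k) = [(r^k + r^{k+1} + ⋯ + r^{k+m−1})/(1 + r + ⋯ + r^{m+k−1})]·σ_r(a, b, m) + [(1 + r + ⋯ + r^{k−1})/(1 + r + ⋯ + r^{m+k−1})]·σ_r(b, c, k); in particular the r-biased slope on a path is a convex combination of the r-biased slopes on its two pieces. -/

import Mathlib

/-- The `r`-biased slope of a path of length `n` whose initial vertex has value `a`
and whose terminal vertex has value `b`: `σ_r(a, b, n) = (b - rⁿ a)/(1 + r + ⋯ + rⁿ⁻¹)`. -/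
noncomputable def biasedSlope (r : ℝ) (a b : ℝ) (n : ℕ) : ℝ :=
  (b - r ^ n * a) / (∑ i ∈ Finset.range n, r ^ i)

/-- the `r`-biased slope on a path of length `m + k` is the stated convex
combination of the `r`-biased slopes on its two pieces of lengths `m` and `k`. -/
theorem stmt_4 (r : ℝ) (hr : 0 < r) (m k : ℕ) (hm : 1 ≤ m) (hk : 1 ≤ k) (a b c : ℝ) :
    biasedSlope r a c (m + k) =
      ((∑ j ∈ Finset.Ico k (k + m), r ^ j) / (∑ j ∈ Finset.range (m + k), r ^ j)) *
          biasedSlope r a b m +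
        ((∑ j ∈ Finset.range k, r ^ j) / (∑ j ∈ Finset.range (m + k), r ^ j)) *
          biasedSlope r b c k := by
  have hpos : ∀ n : ℕ, 1 ≤ n → 0 < ∑ i ∈ Finset.range n, r ^ i := by
    intro n hn
    apply Finset.sum_pos (fun i _ => pow_pos hr i)
    exact Finset.nonempty_range_iff.mpr (by omega)
  have hSm := hpos m hm
  have hSk := hpos k hk
  have hS := hpos (m + k) (by omega)
  have hIco : ∑ j ∈ Finset.Ico k (k + m), r ^ j = r ^ k * ∑ i ∈ Finset.range m, r ^ i := by
    rw [Finset.mul_sum]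
    rw [Finset.sum_Ico_eq_sum_range]
    simp [pow_add, mul_comm]
  have hsplit : ∑ j ∈ Finset.range (m + k), r ^ j =
      (∑ i ∈ Finset.range k, r ^ i) + r ^ k * ∑ i ∈ Finset.range m, r ^ i := by
    rw [add_comm m k, Finset.sum_range_add, Finset.mul_sum]
    simp [pow_add, mul_comm]
  unfold biasedSlope
  rw [hIco]
  field_simp
  ring
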